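/- Let 𝒳 = {a, 0, 1, 2}. For q = (q_0, q_1, q_2) ∈ [0,1]³ define a probability mass function p_q on 𝒳 × 𝒳 by p_q(a,a) = 2/5, p_q(i,i) = (1 − q_i)/5 and p_q(i, i⊕1) = q_i/5 for i ∈ {0,1,2} (where ⊕ denotes addition modulo 3 on {0,1,2}), and p_q(x,y) = 0 for all other pairs. Define the mutual information I(q) := ∑_{(x,y): p_q(x,y) > 0} p_q(x,y) · log₂( p_q(x,y) / ( p_q^X(x) · p_q^Y(y) ) ), where p_q^X and p_q^Y are the first and second marginals of p_q. Then min_{q ∈ [0,1]³} I(q) = log₂(5/2); in particular I(q) ≥ log₂(5/2) for every q ∈ [0,1]³, with equality at q = (1/2, 1/2, 1/2). -/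

import Mathlib

open scoped BigOperators
open Classical

noncomputable section

/-- The alphabet `𝒳 = {a, 0, 1, 2}` of Example 2, encoded as `Option (Fin 3)` with
`none = a` and `some i = i` for `i ∈ {0,1,2}`. -/
abbrev X17 : Type := Option (Fin 3)

/-- The joint distribution `p_q` on `𝒳 × 𝒳` determined by the input-dependent jamming
randomization `q = (q₀,q₁,q₂)`: `p_q(a,a) = 2/5`, `p_q(i,i) = (1−qᵢ)/5`,
`p_q(i, i⊕1) = qᵢ/5` (addition mod 3), and `0` elsewhere. -/
def pq (q : Fin 3 → ℝ) : X17 → X17 → ℝ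
  | none, none => 2 / 5
  | some i, some j =>
      if j = i then (1 - q i) / 5 else if j = i + 1 then q i / 5 else 0
  | _, _ => 0

/-- First marginal of `p_q`. -/
def pqX (q : Fin 3 → ℝ) (x : X17) : ℝ := ∑ y : X17, pq q x y

/-- Second marginal of `p_q`. -/
def pqY (q : Fin 3 → ℝ) (y : X17) : ℝ := ∑ x : X17, pq q x y

/-- Mutual information `I(q) = ∑_{(x,y) : p_q(x,y)>0} p_q(x,y) log₂(p_q(x,y)/(p_q^X(x) p_q^Y(y)))`. -/
def mutualInfo (q : Fin 3 → ℝ) : ℝ :=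
  ∑ x : X17, ∑ y : X17,
    if 0 < pq q x y then
      pq q x y * Real.logb 2 (pq q x y / (pqX q x * pqY q y))
    else 0


/-- Auxiliary: a single guarded mutual-information summand. -/
def term (u s : ℝ) : ℝ := if 0 < u then u * Real.logb 2 (u / (1/5 * s)) else 0

lemma pqX_none (q : Fin 3 → ℝ) : pqX q none = 2/5 := by
  simp [pqX, pq, Fintype.sum_option, Fin.sum_univ_three]

lemma pqX_some (q : Fin 3 → ℝ) (i : Fin 3) : pqX q (some i) = 1/5 := by
  fin_cases i <;> simp [pqX, pq, Fintype.sum_option, Fin.sum_univ_three] <;> norm_num <;> ring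

lemma pqY_none (q : Fin 3 → ℝ) : pqY q none = 2/5 := by
  simp [pqY, pq, Fintype.sum_option, Fin.sum_univ_three]

lemma pqY0 (q : Fin 3 → ℝ) : pqY q (some 0) = (1 - q 0)/5 + q 2/5 := by
  simp [pqY, pq, Fintype.sum_option, Fin.sum_univ_three]

lemma pqY1 (q : Fin 3 → ℝ) : pqY q (some 1) = (1 - q 1)/5 + q 0/5 := by
  simp [pqY, pq, Fintype.sum_option, Fin.sum_univ_three]
  ring

lemma pqY2 (q : Fin 3 → ℝ) : pqY q (some 2) = (1 - q 2)/5 + q 1/5 := by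
  simp [pqY, pq, Fintype.sum_option, Fin.sum_univ_three]
  ring

lemma mutualInfo_eq (q : Fin 3 → ℝ) :
    mutualInfo q = 2/5 * Real.logb 2 (5/2)
      + (term ((1 - q 0)/5) ((1 - q 0)/5 + q 2/5) + term (q 0/5) ((1 - q 1)/5 + q 0/5))
      + (term ((1 - q 1)/5) ((1 - q 1)/5 + q 0/5) + term (q 1/5) ((1 - q 2)/5 + q 1/5))
      + (term ((1 - q 2)/5) ((1 - q 2)/5 + q 1/5) + term (q 2/5) ((1 - q 0)/5 + q 2/5)) := by
  simp only [mutualInfo, Fintype.sum_option, Fin.sum_univ_three, term,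
    pqX_none, pqX_some, pqY_none, pqY0, pqY1, pqY2]
  norm_num [pq, show ((2:Fin 3) = 0) ↔ False from by decide,
    show ((2:Fin 3) = 1) ↔ False from by decide,
    show ((0:Fin 3) = 2) ↔ False from by decide,
    show ((0:Fin 3) = 3) ↔ True from by decide,
    show ((1:Fin 3) = 2) ↔ False from by decide,
    show ((1:Fin 3) = 3) ↔ False from by decide,
    show ((0:Fin 3) = 1 + 1) ↔ False from by decide,
    show ((1:Fin 3) = 1 + 1) ↔ False from by decide,
    show ((2:Fin 3) = 1 + 1) ↔ True from by decide,
    show ((0:Fin 3) = 2 + 1) ↔ True from by decide,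
    show ((1:Fin 3) = 2 + 1) ↔ False from by decide,
    show ((2:Fin 3) = 2 + 1) ↔ False from by decide]
  ring

lemma term_key (u v : ℝ) (hu : 0 ≤ u) (hv : 0 ≤ v) :
    (u + v) * Real.logb 2 (5/2) ≤ term u (u + v) + term v (u + v) := by
  have hl2 : (0:ℝ) < Real.log 2 := Real.log_pos one_lt_two
  have hlogb : Real.logb 2 (5/2) = (Real.log 5 - Real.log 2) / Real.log 2 := by
    rw [Real.logb, Real.log_div (by norm_num) (by norm_num)]
  rcases hu.eq_or_lt with h | hu'
  · rcases hv.eq_or_lt with h' | hv'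
    · simp [term, ← h, ← h']
    · have hval : v / (1/5 * v) = 5 := by field_simp
      simp only [term, ← h, lt_irrefl, if_false, if_pos hv', hval, zero_add]
      have : Real.logb 2 (5/2) ≤ Real.logb 2 5 :=
        Real.logb_le_logb_of_le one_lt_two (by norm_num) (by norm_num)
      nlinarith
  · rcases hv.eq_or_lt with h' | hv'
    · have hval : u / (1/5 * u) = 5 := by field_simp
      simp only [term, ← h', lt_irrefl, if_false, if_pos hu', hval, add_zero]
      have : Real.logb 2 (5/2) ≤ Real.logb 2 5 :=
        Real.logb_le_logb_of_le one_lt_two (by norm_num) (by norm_num)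
      nlinarith
    · have hs : 0 < u + v := by linarith
      simp only [term, if_pos hu', if_pos hv']
      have e1 : Real.log (u / (1/5 * (u + v))) =
          Real.log u + Real.log 5 - Real.log (u + v) := by
        rw [Real.log_div hu'.ne' (by positivity), Real.log_mul (by norm_num) hs.ne',
          one_div, Real.log_inv]
        ring
      have e2 : Real.log (v / (1/5 * (u + v))) =
          Real.log v + Real.log 5 - Real.log (u + v) := by
        rw [Real.log_div hv'.ne' (by positivity), Real.log_mul (by norm_num) hs.ne',
          one_div, Real.log_inv]
        ring
      have h1 : u - (u + v)/2 ≤ u * (Real.log 2 + Real.log u - Real.log (u + v)) := by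
        have hx : (0:ℝ) < 2 * u / (u + v) := by positivity
        have hlog : 1 - (2 * u / (u + v))⁻¹ ≤ Real.log (2 * u / (u + v)) := by
          have := Real.log_le_sub_one_of_pos (inv_pos.mpr hx)
          rw [Real.log_inv] at this; linarith
        have e3 : Real.log (2 * u / (u + v)) = Real.log 2 + Real.log u - Real.log (u + v) := by
          rw [Real.log_div (by positivity) hs.ne', Real.log_mul two_ne_zero hu'.ne']
        rw [e3] at hlog
        have hm := mul_le_mul_of_nonneg_left hlog hu'.le
        have heq : u * (1 - (2 * u / (u + v))⁻¹) = u - (u + v)/2 := by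
          rw [inv_div]; field_simp
        linarith [hm, heq.symm.le, heq.le]
      have h2 : v - (u + v)/2 ≤ v * (Real.log 2 + Real.log v - Real.log (u + v)) := by
        have hx : (0:ℝ) < 2 * v / (u + v) := by positivity
        have hlog : 1 - (2 * v / (u + v))⁻¹ ≤ Real.log (2 * v / (u + v)) := by
          have := Real.log_le_sub_one_of_pos (inv_pos.mpr hx)
          rw [Real.log_inv] at this; linarith
        have e3 : Real.log (2 * v / (u + v)) = Real.log 2 + Real.log v - Real.log (u + v) := by
          rw [Real.log_div (by positivity) hs.ne', Real.log_mul two_ne_zero hv'.ne']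
        rw [e3] at hlog
        have hm := mul_le_mul_of_nonneg_left hlog hv'.le
        have heq : v * (1 - (2 * v / (u + v))⁻¹) = v - (u + v)/2 := by
          rw [inv_div]; field_simp
        linarith [hm, heq.le]
      have H : (u + v) * (Real.log 5 - Real.log 2) ≤
          u * (Real.log u + Real.log 5 - Real.log (u + v)) +
          v * (Real.log v + Real.log 5 - Real.log (u + v)) := by nlinarith [h1, h2]
      rw [hlogb, Real.logb, Real.logb, e1, e2]
      calc (u + v) * ((Real.log 5 - Real.log 2) / Real.log 2)
          = ((u + v) * (Real.log 5 - Real.log 2)) / Real.log 2 := by ring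
        _ ≤ (u * (Real.log u + Real.log 5 - Real.log (u + v)) +
             v * (Real.log v + Real.log 5 - Real.log (u + v))) / Real.log 2 := by
              exact (div_le_div_iff_of_pos_right hl2).mpr H
        _ = u * ((Real.log u + Real.log 5 - Real.log (u + v)) / Real.log 2) +
            v * ((Real.log v + Real.log 5 - Real.log (u + v)) / Real.log 2) := by ring

/-- **Example 2 of the paper**: `min_{q ∈ [0,1]³} I(q) = log₂(5/2)`; in particular
`I(q) ≥ log₂(5/2)` for every `q ∈ [0,1]³`, with equality at `q = (1/2,1/2,1/2)`. -/
theorem example2_min_mutualInfo :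
    (∀ q : Fin 3 → ℝ, (∀ i, q i ∈ Set.Icc (0 : ℝ) 1) →
      Real.logb 2 (5 / 2) ≤ mutualInfo q) ∧
    mutualInfo (fun _ => 1 / 2) = Real.logb 2 (5 / 2) := by
  constructor
  · intro q hq
    obtain ⟨h00, h01⟩ := hq 0
    obtain ⟨h10, h11⟩ := hq 1
    obtain ⟨h20, h21⟩ := hq 2
    rw [mutualInfo_eq]
    have k0 := term_key ((1 - q 0)/5) (q 2/5) (by linarith) (by linarith)
    have k1 := term_key ((1 - q 1)/5) (q 0/5) (by linarith) (by linarith)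
    have k2 := term_key ((1 - q 2)/5) (q 1/5) (by linarith) (by linarith)
    set L := Real.logb 2 (5/2) with hL
    have hsum : ((1 - q 0)/5 + q 2/5) * L + ((1 - q 1)/5 + q 0/5) * L
        + ((1 - q 2)/5 + q 1/5) * L = 3/5 * L := by ring
    linarith
  · rw [mutualInfo_eq]
    norm_num [term]
    ring

end
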